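/- The symmetric bilinear form ⟨e_k, e_l⟩ = δ_{kl} (q−q⁻¹)^{−k} [α choose k] on the module V_α (0 ≤ α ≤ r−1) makes E^{(l)} and F̄^{(l)} adjoint: ⟨E^{(l)}x, y⟩ = ⟨x, F̄^{(l)}y⟩ for all basis vectors x, y, where F̄^{(l)} = (q−q⁻¹)^l F^{(l)}. -/

import Mathlib

noncomputable section

/-- The quantum integer `[n]` at parameter `q`. -/
def qint (q : ℂ) (n : ℤ) : ℂ := (q ^ n - q ^ (-n)) / (q - q⁻¹)

/-- The quantum factorial `[n]!` at parameter `q`. -/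
def qfact (q : ℂ) (n : ℕ) : ℂ := ∏ k ∈ Finset.range n, qint q (k + 1)

/-- The quantum binomial `[m choose n] = [m][m-1]⋯[m-n+1]/[n]!`. -/
def qbinom (q : ℂ) (m : ℤ) (n : ℕ) : ℂ :=
  (∏ k ∈ Finset.range n, qint q (m - k)) / qfact q n

/-- The divided power `E^{(l)}` on `V_α`: `E^{(l)} e_i = [α-i+l choose l] e_{i-l}`,
i.e. `(E^{(l)}v)_j = [α-j choose l] v_{j+l}`. -/
def Edp (q : ℂ) (α l : ℕ) (v : Fin (α + 1) → ℂ) : Fin (α + 1) → ℂ :=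
  fun j =>
    if h : (j : ℕ) + l ≤ α then
      qbinom q ((α : ℤ) - (j : ℤ)) l * v ⟨(j : ℕ) + l, by omega⟩
    else 0

/-- The renormalized divided power `F̄^{(l)} = (q-q⁻¹)^l F^{(l)}` on `V_α`:
`F̄^{(l)} e_i = (q-q⁻¹)^l [i+l choose l] e_{i+l}`, i.e.
`(F̄^{(l)}v)_j = (q-q⁻¹)^l [j choose l] v_{j-l}`. -/
def Fbardp (q : ℂ) (α l : ℕ) (v : Fin (α + 1) → ℂ) : Fin (α + 1) → ℂ :=
  fun j =>
    if h : l ≤ (j : ℕ) then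
      (q - q⁻¹) ^ l * qbinom q ((j : ℕ) : ℤ) l *
        v ⟨(j : ℕ) - l, by have := j.isLt; omega⟩
    else 0

/-- The symmetric bilinear form `⟨e_k, e_l⟩ = δ_{kl} (q-q⁻¹)^{-k} [α choose k]`
on `V_α`. -/
def vform (q : ℂ) (α : ℕ) (u v : Fin (α + 1) → ℂ) : ℂ :=
  ∑ k : Fin (α + 1),
    u k * v k * (q - q⁻¹) ^ (-(k : ℤ)) * qbinom q (α : ℤ) k

section aux
variable {r : ℕ} {ζ : ℂ}

lemma coprime4 (hrodd : Odd r) : Nat.Coprime r 4 := by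
  have h2 : Nat.Coprime r 2 := Nat.coprime_two_right.mpr hrodd
  have : (4 : ℕ) = 2 ^ 2 := by norm_num
  rw [this]
  exact h2.pow_right 2

lemma zeta_pow_ne (hrodd : Odd r) (hr3 : 3 ≤ r) (hζ : IsPrimitiveRoot ζ r)
    {k : ℕ} (hk1 : 1 ≤ k) (hk2 : k ≤ r - 1) : ζ ^ (4 * k) ≠ 1 := by
  intro h
  have hdvd : r ∣ 4 * k := hζ.dvd_of_pow_eq_one _ h
  have : r ∣ k := (Nat.Coprime.dvd_of_dvd_mul_left (coprime4 hrodd) hdvd)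
  have := Nat.le_of_dvd (by omega) this
  omega

lemma D_ne (hrodd : Odd r) (hr3 : 3 ≤ r) (hζ : IsPrimitiveRoot ζ r) :
    (ζ ^ 2) - (ζ ^ 2)⁻¹ ≠ 0 := by
  have hζ0 : ζ ≠ 0 := hζ.ne_zero (by omega)
  have hq0 : (ζ ^ 2) ≠ 0 := pow_ne_zero _ hζ0
  intro h
  have h4 : ζ ^ 4 = 1 := by
    have := sub_eq_zero.mp h
    field_simp at this
    calc ζ ^ 4 = ζ ^ 2 * ζ ^ 2 := by ring
    _ = 1 := by linear_combination this
  exact zeta_pow_ne hrodd hr3 hζ (k := 1) le_rfl (by omega) (by simpa using h4)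

lemma qint_ne (hrodd : Odd r) (hr3 : 3 ≤ r) (hζ : IsPrimitiveRoot ζ r)
    {k : ℕ} (hk1 : 1 ≤ k) (hk2 : k ≤ r - 1) : qint (ζ ^ 2) (k : ℤ) ≠ 0 := by
  have hζ0 : ζ ≠ 0 := hζ.ne_zero (by omega)
  have hq0 : (ζ ^ 2) ≠ 0 := pow_ne_zero _ hζ0
  have hD := D_ne hrodd hr3 hζ
  unfold qint
  rw [div_ne_zero_iff]
  refine ⟨?_, hD⟩
  rw [zpow_natCast, zpow_neg, zpow_natCast, sub_ne_zero]
  intro h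
  have h1 : (ζ ^ 2) ^ k * (ζ ^ 2) ^ k = 1 := by
    nth_rewrite 2 [h]
    exact mul_inv_cancel₀ (pow_ne_zero _ hq0)
  have h2 : ζ ^ (4 * k) = 1 := by
    rw [← h1]; ring
  exact zeta_pow_ne hrodd hr3 hζ hk1 hk2 h2

lemma qfact_ne (hrodd : Odd r) (hr3 : 3 ≤ r) (hζ : IsPrimitiveRoot ζ r)
    {n : ℕ} (hn : n ≤ r - 1) : qfact (ζ ^ 2) n ≠ 0 := by
  unfold qfact
  rw [Finset.prod_ne_zero_iff]
  intro k hk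
  rw [Finset.mem_range] at hk
  have : ((k : ℤ) + 1) = ((k + 1 : ℕ) : ℤ) := by push_cast; ring
  rw [this]
  exact qint_ne hrodd hr3 hζ (by omega) (by omega)

lemma prod_desc (q : ℂ) : ∀ (n m : ℕ), n ≤ m →
    (∏ k ∈ Finset.range n, qint q ((m : ℤ) - k)) * qfact q (m - n) = qfact q m := by
  intro n
  induction n with
  | zero => intro m _; simp [qfact]
  | succ n ih =>
    intro m hm
    rw [Finset.prod_range_succ]
    have h1 : qfact q (m - n) = qfact q (m - (n+1)) * qint q ((m : ℤ) - n) := by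
      have hmn : m - n = (m - (n + 1)) + 1 := by omega
      rw [hmn, qfact, Finset.prod_range_succ, ← qfact]
      congr 1
      push_cast [Nat.cast_sub (by omega : n + 1 ≤ m)]
      ring
    calc (∏ k ∈ Finset.range n, qint q ((m:ℤ) - k)) * qint q ((m:ℤ) - n) * qfact q (m - (n+1))
        = (∏ k ∈ Finset.range n, qint q ((m:ℤ) - k)) * (qfact q (m - (n+1)) * qint q ((m:ℤ) - n)) := by ring
      _ = (∏ k ∈ Finset.range n, qint q ((m:ℤ) - k)) * qfact q (m - n) := by rw [← h1]
      _ = qfact q m := ih m (by omega)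

lemma qbinom_eq (q : ℂ) {n m : ℕ} (hnm : n ≤ m) (hn0 : qfact q n ≠ 0)
    (h : qfact q (m - n) ≠ 0) :
    qbinom q (m : ℤ) n = qfact q m / (qfact q n * qfact q (m - n)) := by
  unfold qbinom
  rw [div_eq_div_iff hn0 (mul_ne_zero hn0 h)]
  have := prod_desc q n m hnm
  linear_combination qfact q n * this

end aux

/-- On `V_α` (`0 ≤ α ≤ r-1`, `q = ζ²`, `ζ` a primitive `r`-th root of unity,
`r` odd), the operators `E^{(l)}` and `F̄^{(l)} = (q-q⁻¹)^l F^{(l)}` are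
adjoint for the form `⟨e_k, e_l⟩ = δ_{kl} (q-q⁻¹)^{-k} [α choose k]`:
`⟨E^{(l)} x, y⟩ = ⟨x, F̄^{(l)} y⟩` for all basis vectors `x, y`. -/
theorem stmt12 (r : ℕ) (hrodd : Odd r) (hr3 : 3 ≤ r) (ζ : ℂ)
    (hζ : IsPrimitiveRoot ζ r) (α : ℕ) (hα : α ≤ r - 1)
    (l : ℕ) (i j : Fin (α + 1)) :
    vform (ζ ^ 2) α (Edp (ζ ^ 2) α l (Pi.single i 1)) (Pi.single j 1)
      = vform (ζ ^ 2) α (Pi.single i 1) (Fbardp (ζ ^ 2) α l (Pi.single j 1)) := by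
  set q := ζ ^ 2 with hq
  have hD : q - q⁻¹ ≠ 0 := D_ne hrodd hr3 hζ
  have hqf : ∀ n : ℕ, n ≤ r - 1 → qfact q n ≠ 0 := fun n hn => qfact_ne hrodd hr3 hζ hn
  have hjα : (j : ℕ) ≤ α := by have := j.isLt; omega
  have hiα : (i : ℕ) ≤ α := by have := i.isLt; omega
  simp only [vform]
  rw [Finset.sum_eq_single_of_mem j (Finset.mem_univ j)
      (fun b _ hb => by simp [Pi.single_eq_of_ne hb]),
    Finset.sum_eq_single_of_mem i (Finset.mem_univ i)
      (fun b _ hb => by simp [Pi.single_eq_of_ne hb])]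
  rw [Pi.single_eq_same, Pi.single_eq_same]
  simp only [Edp, Fbardp]
  by_cases hc : (i : ℕ) = (j : ℕ) + l
  · have hlα : (j : ℕ) + l ≤ α := by omega
    have hli : l ≤ (i : ℕ) := by omega
    rw [dif_pos hlα, dif_pos hli]
    have heq1 : (⟨(j : ℕ) + l, by omega⟩ : Fin (α + 1)) = i := by
      simp [Fin.ext_iff]; omega
    have heq2 : (⟨(i : ℕ) - l, by have := i.isLt; omega⟩ : Fin (α + 1)) = j := by
      simp [Fin.ext_iff]; omega
    rw [heq1, heq2, Pi.single_eq_same, Pi.single_eq_same]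
    have c1 : (α : ℤ) - ((j : ℕ) : ℤ) = ((α - (j : ℕ) : ℕ) : ℤ) := by omega
    rw [c1]
    have hf_l : qfact q l ≠ 0 := hqf l (by omega)
    have hf_j : qfact q (j : ℕ) ≠ 0 := hqf _ (by omega)
    have hf_i : qfact q (i : ℕ) ≠ 0 := hqf _ (by omega)
    have hf_aj : qfact q (α - (j : ℕ)) ≠ 0 := hqf _ (by omega)
    have hf_ai : qfact q (α - (i : ℕ)) ≠ 0 := hqf _ (by omega)
    have hf_ajl : qfact q (α - (j : ℕ) - l) ≠ 0 := hqf _ (by omega)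
    have hf_il : qfact q ((i : ℕ) - l) ≠ 0 := hqf _ (by omega)
    have hf_a : qfact q α ≠ 0 := hqf _ (by omega)
    rw [qbinom_eq q (by omega : l ≤ α - (j : ℕ)) hf_l hf_ajl,
      qbinom_eq q hli hf_l hf_il,
      qbinom_eq q hjα hf_j hf_aj,
      qbinom_eq q hiα hf_i hf_ai]
    have e1 : α - (j : ℕ) - l = α - (i : ℕ) := by omega
    have e2 : (i : ℕ) - l = (j : ℕ) := by omega
    rw [e1, e2]
    rw [show -((j : Fin (α+1)) : ℤ) = -(((j : ℕ) : ℕ) : ℤ) by simp,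
      show -((i : Fin (α+1)) : ℤ) = -(((i : ℕ) : ℕ) : ℤ) by simp]
    rw [zpow_neg, zpow_natCast, zpow_neg, zpow_natCast]
    have hci : (i : ℕ) = (j : ℕ) + l := hc
    rw [hci]
    have hf_jl : qfact q ((j : ℕ) + l) ≠ 0 := hqf _ (by omega)
    have hf_ajl2 : qfact q (α - ((j : ℕ) + l)) ≠ 0 := hqf _ (by omega)
    have key : ∀ D A X F J I L : ℂ, D ≠ 0 → A ≠ 0 → X ≠ 0 → F ≠ 0 → J ≠ 0 → I ≠ 0 → L ≠ 0 →
        A / (L * X) * 1 * 1 * ((D ^ (j : ℕ))⁻¹) * (F / (J * A)) =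
        1 * (D ^ l * (I / (L * J)) * 1) * ((D ^ ((j : ℕ) + l))⁻¹) * (F / (I * X)) := by
      intro D A X F J I L hD hA hX hF hJ hI hL
      have hDl : D ^ l ≠ 0 := pow_ne_zero _ hD
      have hDj : D ^ (j : ℕ) ≠ 0 := pow_ne_zero _ hD
      rw [pow_add]
      field_simp
    exact key _ _ _ _ _ _ _ hD hf_aj hf_ajl2 hf_a hf_j hf_jl hf_l
  · by_cases h1 : (j : ℕ) + l ≤ α
    · rw [dif_pos h1]
      by_cases h2 : l ≤ (i : ℕ)
      · rw [dif_pos h2,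
          Pi.single_eq_of_ne (by simp [Fin.ext_iff]; omega :
            (⟨(j : ℕ) + l, by omega⟩ : Fin (α + 1)) ≠ i),
          Pi.single_eq_of_ne (by simp [Fin.ext_iff]; omega :
            (⟨(i : ℕ) - l, by have := i.isLt; omega⟩ : Fin (α + 1)) ≠ j)]
        ring
      · rw [dif_neg h2,
          Pi.single_eq_of_ne (by simp [Fin.ext_iff]; omega :
            (⟨(j : ℕ) + l, by omega⟩ : Fin (α + 1)) ≠ i)]
        ring
    · rw [dif_neg h1]
      by_cases h2 : l ≤ (i : ℕ)
      · rw [dif_pos h2,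
          Pi.single_eq_of_ne (by simp [Fin.ext_iff]; omega :
            (⟨(i : ℕ) - l, by have := i.isLt; omega⟩ : Fin (α + 1)) ≠ j)]
        ring
      · rw [dif_neg h2]
        ring

end
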